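/- Let Δ_1, Δ_2 ⊂ ℝⁿ (n ≥ 3) be n-simplices whose intersection Δ = Δ_1 ∩ Δ_2 is an (n−1)-simplex spanning a hyperplane V, and let L, R : ℝⁿ → (ℝⁿ)^k be nonzero linear maps agreeing on V. Suppose ε > 0 is small enough that (1+ε)(1+7k√ε) < 3/2 and 5√k ε^{1/4} < 1/2, and suppose there are indices i_L ≠ i_R with: ‖L_{i_L}‖ⁿ ≤ (1+7k√ε) det L_{i_L}, ‖L‖ ≤ (1+ε)‖L_{i_L}‖, ‖R_{i_L}‖ ≤ 5√k ε^{1/4}‖R‖, and symmetrically for R with index i_R. Then a contradiction follows; hence i_L = i_R. -/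

import Mathlib

open Module

lemma hadamard_unit (n : ℕ) (hn : 0 < n)
    (T : EuclideanSpace ℝ (Fin n) →L[ℝ] EuclideanSpace ℝ (Fin n))
    (v : EuclideanSpace ℝ (Fin n)) (hv : ‖v‖ = 1) :
    |LinearMap.det (T : EuclideanSpace ℝ (Fin n) →ₗ[ℝ] EuclideanSpace ℝ (Fin n))|
      ≤ ‖T v‖ * ‖T‖ ^ (n - 1) := by
  haveI : NeZero n := ⟨hn.ne'⟩
  haveI : Fact (finrank ℝ (EuclideanSpace ℝ (Fin n)) = n) := ⟨finrank_euclideanSpace_fin⟩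
  have hcard : finrank ℝ (EuclideanSpace ℝ (Fin n)) = Fintype.card (Fin n) := by simp
  have horth : Orthonormal ℝ (({0} : Set (Fin n)).restrict (fun _ => v)) := by
    constructor
    · intro i; exact hv
    · rintro ⟨i, hi⟩ ⟨j, hj⟩ hij
      simp only [Set.mem_singleton_iff] at hi hj
      exact absurd (Subtype.ext (hi.trans hj.symm)) hij
  obtain ⟨b, hb⟩ := horth.exists_orthonormalBasis_extension_of_card_eq hcard
  have hb0 : b 0 = v := hb 0 rfl
  set o := b.toBasis.orientation with ho
  have hdet : LinearMap.det (T : EuclideanSpace ℝ (Fin n) →ₗ[ℝ] EuclideanSpace ℝ (Fin n))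
      = b.toBasis.det (⇑T ∘ ⇑b) := by
    have h := b.toBasis.det_comp (T : EuclideanSpace ℝ (Fin n) →ₗ[ℝ] EuclideanSpace ℝ (Fin n)) ⇑b
    rw [show b.toBasis.det ⇑b = 1 by rw [← b.coe_toBasis]; exact b.toBasis.det_self, mul_one] at h
    simpa using h.symm
  have h1 : |o.volumeForm (⇑T ∘ ⇑b)| = |b.toBasis.det (⇑T ∘ ⇑b)| :=
    o.volumeForm_robust' b _
  have h2 : |o.volumeForm (⇑T ∘ ⇑b)| ≤ ∏ i : Fin n, ‖(⇑T ∘ ⇑b) i‖ :=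
    o.abs_volumeForm_apply_le _
  have h3 : ∏ i : Fin n, ‖(⇑T ∘ ⇑b) i‖ ≤ ‖T v‖ * ‖T‖ ^ (n - 1) := by
    rw [← Finset.mul_prod_erase Finset.univ _ (Finset.mem_univ (0 : Fin n))]
    have : (⇑T ∘ ⇑b) 0 = T v := by simp [hb0]
    rw [this]
    apply mul_le_mul_of_nonneg_left _ (norm_nonneg _)
    calc ∏ i ∈ Finset.univ.erase (0 : Fin n), ‖(⇑T ∘ ⇑b) i‖
        ≤ ∏ _i ∈ Finset.univ.erase (0 : Fin n), ‖T‖ := by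
          apply Finset.prod_le_prod (fun i _ => norm_nonneg _)
          intro i _
          calc ‖T (b i)‖ ≤ ‖T‖ * ‖b i‖ := T.le_opNorm _
          _ = ‖T‖ := by rw [b.orthonormal.1 i, mul_one]
      _ = ‖T‖ ^ (n - 1) := by
          rw [Finset.prod_const]
          congr 1
          simp [Finset.card_erase_of_mem]
  rw [hdet, ← h1]
  exact h2.trans h3

lemma half_step (n k : ℕ) (hn : 3 ≤ n)
    (ε : ℝ) (hε : 0 < ε)
    (hε₁ : (1 + ε) * (1 + 7 * k * Real.sqrt ε) < 3 / 2)
    (hε₂ : 5 * Real.sqrt k * ε ^ ((1 : ℝ) / 4) < 1 / 2)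
    (L R : EuclideanSpace ℝ (Fin n) →L[ℝ]
        PiLp 2 (fun _ : Fin k => EuclideanSpace ℝ (Fin n)))
    (Li Ri : Fin k → (EuclideanSpace ℝ (Fin n) →L[ℝ] EuclideanSpace ℝ (Fin n)))
    (hLi : ∀ i v, Li i v = L v i) (hRi : ∀ i v, Ri i v = R v i)
    (hRpos : 0 < ‖R‖)
    (u : EuclideanSpace ℝ (Fin n)) (hu : ‖u‖ = 1) (hagree : L u = R u)
    (iL : Fin k)
    (hLq : ‖Li iL‖ ^ n ≤ (1 + 7 * k * Real.sqrt ε) * LinearMap.det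
        ((Li iL : EuclideanSpace ℝ (Fin n) →ₗ[ℝ] EuclideanSpace ℝ (Fin n))))
    (hLn : ‖L‖ ≤ (1 + ε) * ‖Li iL‖)
    (hRL : ‖Ri iL‖ ≤ 5 * Real.sqrt k * ε ^ ((1 : ℝ) / 4) * ‖R‖) :
    ‖L‖ < 3 / 4 * ‖R‖ := by
  set C : ℝ := 1 + 7 * k * Real.sqrt ε with hCdef
  have hsqrt : 0 ≤ Real.sqrt ε := Real.sqrt_nonneg _
  have hC : (0:ℝ) < C := by positivity
  set T := Li iL with hT
  -- value of T at u
  have hTu : T u = Ri iL u := by rw [hLi, hRi, hagree]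
  have hTule : ‖T u‖ < 1 / 2 * ‖R‖ := by
    have h1 : ‖T u‖ ≤ ‖Ri iL‖ := by
      rw [hTu]
      calc ‖Ri iL u‖ ≤ ‖Ri iL‖ * ‖u‖ := (Ri iL).le_opNorm u
        _ = ‖Ri iL‖ := by rw [hu, mul_one]
    have h2 : 5 * Real.sqrt k * ε ^ ((1 : ℝ) / 4) * ‖R‖ < 1 / 2 * ‖R‖ := by
      apply mul_lt_mul_of_pos_right hε₂ hRpos
    linarith [hRL]
  rcases eq_or_lt_of_le (norm_nonneg T) with h0 | hTpos
  · -- ‖T‖ = 0, so ‖L‖ ≤ 0 < (3/4)‖R‖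
    have : ‖L‖ ≤ 0 := by
      have := hLn; rw [← h0] at this; linarith
    nlinarith
  -- Hadamard
  have hH : |LinearMap.det (T : EuclideanSpace ℝ (Fin n) →ₗ[ℝ] EuclideanSpace ℝ (Fin n))|
      ≤ ‖T u‖ * ‖T‖ ^ (n - 1) := hadamard_unit n (by omega) T u hu
  have hchain : ‖T‖ * ‖T‖ ^ (n - 1) ≤ (C * ‖T u‖) * ‖T‖ ^ (n - 1) := by
    have hpow : ‖T‖ ^ n = ‖T‖ * ‖T‖ ^ (n - 1) := by
      rw [← pow_succ']
      congr 1
      omega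
    calc ‖T‖ * ‖T‖ ^ (n - 1) = ‖T‖ ^ n := hpow.symm
      _ ≤ C * LinearMap.det (T : EuclideanSpace ℝ (Fin n) →ₗ[ℝ] EuclideanSpace ℝ (Fin n)) := hLq
      _ ≤ C * (‖T u‖ * ‖T‖ ^ (n - 1)) :=
          mul_le_mul_of_nonneg_left ((le_abs_self _).trans hH) hC.le
      _ = (C * ‖T u‖) * ‖T‖ ^ (n - 1) := by ring
  have hTle : ‖T‖ ≤ C * ‖T u‖ :=
    le_of_mul_le_mul_right hchain (pow_pos hTpos _)
  -- combine
  have h5 : ‖L‖ ≤ (1 + ε) * C * ‖T u‖ := by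
    calc ‖L‖ ≤ (1 + ε) * ‖T‖ := hLn
      _ ≤ (1 + ε) * (C * ‖T u‖) := by
          apply mul_le_mul_of_nonneg_left hTle (by linarith)
      _ = (1 + ε) * C * ‖T u‖ := by ring
  have hTunn : 0 ≤ ‖T u‖ := norm_nonneg _
  nlinarith [mul_lt_mul_of_pos_left hTule (show (0:ℝ) < 3/2 by norm_num),
    mul_le_mul_of_nonneg_right (le_of_lt hε₁) hTunn]

/-- Piecewise-affine rigidity (key step of Proposition 10.2): if two nonzero linear maps
`L, R : ℝⁿ → (ℝⁿ)^k` agree on a hyperplane `V` (spanned by the common `(n−1)`-face of two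
`n`-simplices), `ε` is small enough that `(1+ε)(1+7k√ε) < 3/2` and `5√k ε^{1/4} < 1/2`, and
both maps have distinguished quasiregular indices `i_L ≠ i_R` with the listed estimates, then
a contradiction follows; hence `i_L = i_R`. -/
theorem adjacent_simplices_same_index (n k : ℕ) (hn : 3 ≤ n) (hk : 1 ≤ k)
    (ε : ℝ) (hε : 0 < ε)
    (hε₁ : (1 + ε) * (1 + 7 * k * Real.sqrt ε) < 3 / 2)
    (hε₂ : 5 * Real.sqrt k * ε ^ ((1 : ℝ) / 4) < 1 / 2)
    (V : Submodule ℝ (EuclideanSpace ℝ (Fin n)))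
    (hV : Module.finrank ℝ V = n - 1)
    (L R : EuclideanSpace ℝ (Fin n) →L[ℝ]
        PiLp 2 (fun _ : Fin k => EuclideanSpace ℝ (Fin n)))
    (Li Ri : Fin k → (EuclideanSpace ℝ (Fin n) →L[ℝ] EuclideanSpace ℝ (Fin n)))
    (hLi : ∀ i v, Li i v = L v i) (hRi : ∀ i v, Ri i v = R v i)
    (hL0 : L ≠ 0) (hR0 : R ≠ 0)
    (hagree : ∀ v ∈ V, L v = R v)
    (iL iR : Fin k) (hne : iL ≠ iR)
    (hLq : ‖Li iL‖ ^ n ≤ (1 + 7 * k * Real.sqrt ε) * LinearMap.det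
        ((Li iL : EuclideanSpace ℝ (Fin n) →ₗ[ℝ] EuclideanSpace ℝ (Fin n))))
    (hLn : ‖L‖ ≤ (1 + ε) * ‖Li iL‖)
    (hRL : ‖Ri iL‖ ≤ 5 * Real.sqrt k * ε ^ ((1 : ℝ) / 4) * ‖R‖)
    (hRq : ‖Ri iR‖ ^ n ≤ (1 + 7 * k * Real.sqrt ε) * LinearMap.det
        ((Ri iR : EuclideanSpace ℝ (Fin n) →ₗ[ℝ] EuclideanSpace ℝ (Fin n))))
    (hRn : ‖R‖ ≤ (1 + ε) * ‖Ri iR‖)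
    (hLR : ‖Li iR‖ ≤ 5 * Real.sqrt k * ε ^ ((1 : ℝ) / 4) * ‖L‖) :
    False := by
  have hLpos : 0 < ‖L‖ := norm_pos_iff.mpr hL0
  have hRpos : 0 < ‖R‖ := norm_pos_iff.mpr hR0
  -- a unit vector in V
  have hVne : V ≠ ⊥ := by
    intro h
    rw [h] at hV
    simp only [finrank_bot] at hV
    omega
  obtain ⟨v, hvV, hv0⟩ := Submodule.exists_mem_ne_zero_of_ne_bot hVne
  set u : EuclideanSpace ℝ (Fin n) := ‖v‖⁻¹ • v with hudef
  have huV : u ∈ V := V.smul_mem _ hvV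
  have hu : ‖u‖ = 1 := norm_smul_inv_norm hv0
  have hLu : L u = R u := hagree u huV
  have h1 : ‖L‖ < 3 / 4 * ‖R‖ :=
    half_step n k hn ε hε hε₁ hε₂ L R Li Ri hLi hRi hRpos u hu hLu iL hLq hLn hRL
  have h2 : ‖R‖ < 3 / 4 * ‖L‖ :=
    half_step n k hn ε hε hε₁ hε₂ R L Ri Li hRi hLi hLpos u hu hLu.symm iR hRq hRn hLR
  linarith
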